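/- Let d ≥ 1 and let S₁, S₂ ⊆ ℝ^d be bounded nonempty sets. Then P(S₁ ∪ S₂) ≤ P(S₁) + P(S₂). -/

import Mathlib

open MeasureTheory Set Metric

/-- `P₀(S)` : the essential infimum over `t > 0` of the `(d−1)`-dimensional Hausdorff
measure of the topological boundary of the open `t`-neighborhood of `S`. -/
noncomputable def P0 {d : ℕ} (S : Set (EuclideanSpace ℝ (Fin d))) : ENNReal :=
  essInf (fun t : ℝ => μH[(d : ℝ) - 1] (frontier (thickening t S)))
    (volume.restrict (Ioi (0 : ℝ)))

/-- `P(S) = inf {P₀(T) : T bounded, S ⊆ T}`, a 'minimal perimeter' of `S`. -/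
noncomputable def Pm {d : ℕ} (S : Set (EuclideanSpace ℝ (Fin d))) : ENNReal :=
  ⨅ (T : Set (EuclideanSpace ℝ (Fin d))) (_ : Bornology.IsBounded T) (_ : S ⊆ T), P0 T

section Aux

open EMetric Filter ENNReal Bornology Topology

/-- The frontier of a positive thickening in a real normed space is exactly the corresponding
level set of `infEdist`. -/
lemma frontier_thickening_eq {E : Type*} [NormedAddCommGroup E] [NormedSpace ℝ E]
    (T : Set E) {t : ℝ} (ht : 0 < t) :
    frontier (thickening t T) = (fun x => infEdist x T) ⁻¹' {ENNReal.ofReal t} := by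
  rw [frontier, isOpen_thickening.interior_eq, closure_thickening ht]
  ext x
  simp only [mem_diff, mem_cthickening_iff, mem_thickening_iff_infEdist_lt, not_lt, mem_preimage,
    mem_singleton_iff]
  exact ⟨fun h => le_antisymm h.1 h.2, fun h => ⟨h.le, h.ge⟩⟩

variable {X : Type*} [EMetricSpace X]

/-- The set of parameters whose level set inside `K` admits a "good" open cover is open. -/
lemma isOpen_goodCover {K : Set X} (hK : IsCompact K) {G : X → ℝ≥0∞} (hG : Continuous G)
    (s : ℝ) (c r : ℝ≥0∞) :
    IsOpen {y : ℝ≥0∞ | ∃ U : ℕ → Set X, (∀ i, IsOpen (U i)) ∧ (K ∩ G ⁻¹' {y} ⊆ ⋃ i, U i) ∧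
      (∀ i, diam (U i) ≤ r) ∧ ∑' i, ⨆ _ : (U i).Nonempty, diam (U i) ^ s < c} := by
  rw [isOpen_iff_mem_nhds]
  rintro y ⟨U, hUo, hUc, hUd, hUs⟩
  have hC : IsCompact (K \ ⋃ i, U i) := hK.diff (isOpen_iUnion hUo)
  have hCc : IsClosed (G '' (K \ ⋃ i, U i)) := (hC.image hG).isClosed
  have hy : y ∈ (G '' (K \ ⋃ i, U i))ᶜ := by
    rintro ⟨x, ⟨hxK, hxU⟩, rfl⟩
    exact hxU (hUc ⟨hxK, rfl⟩)
  filter_upwards [hCc.isOpen_compl.mem_nhds hy] with z hz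
  refine ⟨U, hUo, ?_, hUd, hUs⟩
  rintro x ⟨hxK, hx⟩
  by_contra hxU
  exact hz ⟨x, ⟨hxK, hxU⟩, hx⟩

lemma half_pow_pos (n : ℕ) : 0 < (2 : ℝ≥0∞)⁻¹ ^ n :=
  ENNReal.pow_pos (ENNReal.inv_pos.mpr ENNReal.ofNat_ne_top) n

lemma half_pow_ne_top (n : ℕ) : (2 : ℝ≥0∞)⁻¹ ^ n ≠ ⊤ :=
  ((pow_le_one' (ENNReal.inv_le_one.mpr one_le_two) n).trans_lt ENNReal.one_lt_top).ne

lemma half_add_half (n : ℕ) :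
    (2 : ℝ≥0∞)⁻¹ ^ (n + 1) + (2 : ℝ≥0∞)⁻¹ ^ (n + 1) = (2 : ℝ≥0∞)⁻¹ ^ n := by
  rw [pow_succ, ← mul_add]
  have : (2 : ℝ≥0∞)⁻¹ + 2⁻¹ = 1 := by
    rw [← two_mul, ENNReal.mul_inv_cancel two_ne_zero ENNReal.ofNat_ne_top]
  rw [this, mul_one]

lemma tsum_half_pow_succ : ∑' i : ℕ, (2 : ℝ≥0∞)⁻¹ ^ (i + 1) = 1 := by
  have h1 : ∑' i : ℕ, (2 : ℝ≥0∞)⁻¹ ^ (i + 1) = (∑' i : ℕ, (2 : ℝ≥0∞)⁻¹ ^ i) * 2⁻¹ := by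
    rw [← ENNReal.tsum_mul_right]
    simp_rw [pow_succ]
  have h2 : ∑' i : ℕ, (2 : ℝ≥0∞)⁻¹ ^ i = 2 := by
    rw [ENNReal.tsum_geometric]
    have : (1 : ℝ≥0∞) - 2⁻¹ = 2⁻¹ := by
      rw [ENNReal.sub_eq_of_eq_add (by simp)]
      rw [← two_mul, ENNReal.mul_inv_cancel two_ne_zero ENNReal.ofNat_ne_top]
    rw [this, inv_inv]
  rw [h1, h2, ENNReal.mul_inv_cancel two_ne_zero ENNReal.ofNat_ne_top]

/-- Fattening a set into an open set with controlled diameter and Hausdorff sum contribution. -/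
lemma exists_open_fattening (s : ℝ) (hs : 0 ≤ s) (A : Set X) (n : ℕ)
    (hA : diam A ≤ (2 : ℝ≥0∞)⁻¹ ^ (n + 1)) (ε' : ℝ≥0∞) (hε' : 0 < ε') :
    ∃ V : Set X, IsOpen V ∧ A ⊆ V ∧ diam V ≤ (2 : ℝ≥0∞)⁻¹ ^ n ∧
      (⨆ _ : V.Nonempty, diam V ^ s) ≤ (⨆ _ : A.Nonempty, diam A ^ s) + ε' := by
  rcases A.eq_empty_or_nonempty with rfl | hne
  · exact ⟨∅, isOpen_empty, Subset.rfl, by simp [EMetric.diam], by simp⟩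
  have hDlt : diam A ≠ ⊤ := (hA.trans_lt (half_pow_ne_top (n + 1)).lt_top).ne
  have hDs : diam A ^ s ≠ ⊤ := (ENNReal.rpow_lt_top_of_nonneg hs hDlt).ne
  -- continuity of `η ↦ (diam A + η) ^ s` at `0`
  have hcont : Tendsto (fun η : ℝ≥0∞ => (diam A + η) ^ s) (𝓝 0) (𝓝 (diam A ^ s)) := by
    have h1 : Tendsto (fun η : ℝ≥0∞ => diam A + η) (𝓝 0) (𝓝 (diam A)) := by
      simpa using (tendsto_const_nhds.add tendsto_id :
        Tendsto (fun η : ℝ≥0∞ => diam A + η) (𝓝 0) (𝓝 (diam A + 0)))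
    exact (ENNReal.continuous_rpow_const.tendsto _).comp h1
  have hlt : diam A ^ s < diam A ^ s + ε' := ENNReal.lt_add_right hDs hε'.ne'
  have hev : ∀ᶠ η : ℝ≥0∞ in 𝓝 0, (diam A + η) ^ s < diam A ^ s + ε' :=
    hcont.eventually (eventually_lt_nhds hlt)
  obtain ⟨θ, hθ0, hθ⟩ := ENNReal.nhds_zero_basis.eventually_iff.mp hev
  set ρ : ℝ≥0∞ := min θ ((2 : ℝ≥0∞)⁻¹ ^ (n + 1)) with hρdef
  have hρ0 : ρ ≠ 0 := (lt_min hθ0 (half_pow_pos (n + 1))).ne'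
  obtain ⟨δ, hδ0, hδρ⟩ := ENNReal.exists_nnreal_pos_mul_lt (ENNReal.ofNat_ne_top (n := 2)) hρ0
  -- hδρ : ↑δ * 2 < ρ
  refine ⟨thickening (δ : ℝ) A, isOpen_thickening,
    self_subset_thickening (by exact_mod_cast hδ0) A, ?_, ?_⟩
  · calc diam (thickening (δ : ℝ) A) ≤ diam A + 2 * δ := Metric.ediam_thickening_le δ
      _ ≤ (2 : ℝ≥0∞)⁻¹ ^ (n + 1) + (2 : ℝ≥0∞)⁻¹ ^ (n + 1) := by
          refine add_le_add hA ?_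
          rw [mul_comm]
          exact (hδρ.le.trans (min_le_right _ _))
      _ = (2 : ℝ≥0∞)⁻¹ ^ n := half_add_half n
  · have hVne : (thickening (δ : ℝ) A).Nonempty :=
      hne.mono (self_subset_thickening (by exact_mod_cast hδ0) A)
    rw [iSup_pos hVne, iSup_pos hne]
    have hd : diam (thickening (δ : ℝ) A) ≤ diam A + ↑δ * 2 := by
      rw [mul_comm]; exact Metric.ediam_thickening_le δ
    have h2 : (diam A + ↑δ * 2) ^ s < diam A ^ s + ε' :=
      hθ (hδρ.trans_le (min_le_left _ _))
    exact (ENNReal.rpow_le_rpow hd hs).trans h2.le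

end Aux

section Meas

open EMetric Filter ENNReal Bornology Topology

variable {X : Type*} [EMetricSpace X] [MeasurableSpace X] [BorelSpace X]

/-- Measurability in the parameter of the Hausdorff measure of level sets inside a
compact set. -/
lemma measurable_hausdorff_level {K : Set X} (hK : IsCompact K) {G : X → ℝ≥0∞}
    (hG : Continuous G) {s : ℝ} (hs : 0 ≤ s) :
    Measurable fun y => μH[s] (K ∩ G ⁻¹' {y}) := by
  apply measurable_of_Iic
  intro b
  rcases eq_or_ne b ⊤ with rfl | hb
  · simp
  have key : (fun y => μH[s] (K ∩ G ⁻¹' {y})) ⁻¹' Iic b =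
      ⋂ n : ℕ, {y : ℝ≥0∞ | ∃ U : ℕ → Set X, (∀ i, IsOpen (U i)) ∧ (K ∩ G ⁻¹' {y} ⊆ ⋃ i, U i) ∧
        (∀ i, diam (U i) ≤ (2 : ℝ≥0∞)⁻¹ ^ n) ∧
        ∑' i, ⨆ _ : (U i).Nonempty, diam (U i) ^ s < b + (2 : ℝ≥0∞)⁻¹ ^ n} := by
    apply Subset.antisymm
    · intro y hy
      simp only [mem_preimage, mem_Iic] at hy
      refine mem_iInter.2 fun n => ?_
      have hε0 : 0 < (2 : ℝ≥0∞)⁻¹ ^ (n + 1) := half_pow_pos (n + 1)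
      have hεtop : (2 : ℝ≥0∞)⁻¹ ^ (n + 1) ≠ ⊤ := half_pow_ne_top (n + 1)
      have h1 : (⨅ (t : ℕ → Set X) (_ : K ∩ G ⁻¹' {y} ⊆ ⋃ i, t i)
          (_ : ∀ i, diam (t i) ≤ (2 : ℝ≥0∞)⁻¹ ^ (n + 1)),
            ∑' i, ⨆ _ : (t i).Nonempty, diam (t i) ^ s) < b + (2 : ℝ≥0∞)⁻¹ ^ (n + 1) := by
        refine lt_of_le_of_lt ?_ (ENNReal.lt_add_right hb hε0.ne')
        refine le_trans ?_ hy
        rw [Measure.hausdorffMeasure_apply]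
        exact le_iSup₂ (f := fun (r : ℝ≥0∞) (_ : 0 < r) =>
          ⨅ (t : ℕ → Set X) (_ : K ∩ G ⁻¹' {y} ⊆ ⋃ i, t i) (_ : ∀ i, diam (t i) ≤ r),
            ∑' i, ⨆ _ : (t i).Nonempty, diam (t i) ^ s) _ hε0
      obtain ⟨t, ht⟩ := iInf_lt_iff.mp h1
      obtain ⟨hcov, ht⟩ := iInf_lt_iff.mp ht
      obtain ⟨hdiam, hsum⟩ := iInf_lt_iff.mp ht
      choose V hVo hVsub hVd hVs using fun i =>
        exists_open_fattening s hs (t i) n (hdiam i)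
          ((2 : ℝ≥0∞)⁻¹ ^ (n + 1) * (2 : ℝ≥0∞)⁻¹ ^ (i + 1))
          (ENNReal.mul_pos hε0.ne' (half_pow_pos (i + 1)).ne')
      refine ⟨V, hVo, hcov.trans (iUnion_mono hVsub), hVd, ?_⟩
      have hsum2 : ∑' i, ⨆ _ : (V i).Nonempty, diam (V i) ^ s ≤
          (∑' i, ⨆ _ : (t i).Nonempty, diam (t i) ^ s) + (2 : ℝ≥0∞)⁻¹ ^ (n + 1) := by
        calc ∑' i, ⨆ _ : (V i).Nonempty, diam (V i) ^ s
            ≤ ∑' i, ((⨆ _ : (t i).Nonempty, diam (t i) ^ s) +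
              (2 : ℝ≥0∞)⁻¹ ^ (n + 1) * (2 : ℝ≥0∞)⁻¹ ^ (i + 1)) := ENNReal.tsum_le_tsum hVs
          _ = (∑' i, ⨆ _ : (t i).Nonempty, diam (t i) ^ s) +
              ∑' i, (2 : ℝ≥0∞)⁻¹ ^ (n + 1) * (2 : ℝ≥0∞)⁻¹ ^ (i + 1) := ENNReal.tsum_add
          _ = (∑' i, ⨆ _ : (t i).Nonempty, diam (t i) ^ s) + (2 : ℝ≥0∞)⁻¹ ^ (n + 1) := by
              rw [ENNReal.tsum_mul_left, tsum_half_pow_succ, mul_one]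
      calc ∑' i, ⨆ _ : (V i).Nonempty, diam (V i) ^ s
          ≤ (∑' i, ⨆ _ : (t i).Nonempty, diam (t i) ^ s) + (2 : ℝ≥0∞)⁻¹ ^ (n + 1) := hsum2
        _ < (b + (2 : ℝ≥0∞)⁻¹ ^ (n + 1)) + (2 : ℝ≥0∞)⁻¹ ^ (n + 1) :=
            ENNReal.add_lt_add_right hεtop hsum
        _ = b + (2 : ℝ≥0∞)⁻¹ ^ n := by rw [add_assoc, half_add_half n]
    · intro y hy
      simp only [mem_iInter, mem_setOf_eq] at hy
      simp only [mem_preimage, mem_Iic]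
      rw [Measure.hausdorffMeasure_apply]
      refine iSup₂_le fun r hr => ?_
      refine ENNReal.le_of_forall_pos_le_add fun η hη _ => ?_
      have hmin : 0 < min r (η : ℝ≥0∞) := lt_min hr (by exact_mod_cast hη)
      obtain ⟨n, hn⟩ : ∃ n : ℕ, (2 : ℝ≥0∞)⁻¹ ^ n < min r (η : ℝ≥0∞) := by
        have htend := ENNReal.tendsto_pow_atTop_nhds_zero_of_lt_one
          (ENNReal.inv_lt_one.mpr ENNReal.one_lt_two)
        exact (htend.eventually (eventually_lt_nhds hmin)).exists
      obtain ⟨U, hUo, hUc, hUd, hUs⟩ := hy n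
      have hle : (⨅ (t : ℕ → Set X) (_ : K ∩ G ⁻¹' {y} ⊆ ⋃ i, t i) (_ : ∀ i, diam (t i) ≤ r),
          ∑' i, ⨆ _ : (t i).Nonempty, diam (t i) ^ s) ≤
            ∑' i, ⨆ _ : (U i).Nonempty, diam (U i) ^ s := by
        refine iInf_le_of_le U (iInf_le_of_le hUc (iInf_le_of_le ?_ le_rfl))
        exact fun i => (hUd i).trans (hn.le.trans (min_le_left _ _))
      refine hle.trans (hUs.le.trans ?_)
      exact add_le_add le_rfl (hn.le.trans (min_le_right _ _))
  rw [key]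
  exact MeasurableSet.iInter fun n => (isOpen_goodCover hK hG s _ _).measurableSet

end Meas

section Shift

open Filter ENNReal Bornology Topology

/-- Two non-null subsets of `(0,∞)` can be simultaneously translated to overlap a common
non-null set of positive times. -/
lemma exists_common_translate {E₁ E₂ : Set ℝ} (h₁m : MeasurableSet E₁) (h₂m : MeasurableSet E₂)
    (h₁ : volume E₁ ≠ 0) (h₂ : volume E₂ ≠ 0) (h₁s : E₁ ⊆ Ioi 0) (h₂s : E₂ ⊆ Ioi 0) :
    ∃ a b : ℝ, 0 < a ∧ 0 < b ∧
      volume {s : ℝ | 0 < s ∧ a + s ∈ E₁ ∧ b + s ∈ E₂} ≠ 0 := by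
  have hres : ∀ {E : Set ℝ}, MeasurableSet E → volume E ≠ 0 → ∃ x ∈ E,
      Tendsto (fun r => volume (E ∩ closedBall x r) / volume (closedBall x r))
        (nhdsWithin 0 (Ioi 0)) (nhds 1) := by
    intro E hEm hE
    have hae := Besicovitch.ae_tendsto_measure_inter_div volume E
    have hne : (ae (volume.restrict E)).NeBot :=
      ae_neBot.2 (by rwa [Ne, Measure.restrict_eq_zero])
    obtain ⟨x, hx1, hx2⟩ := ((ae_restrict_mem hEm).and hae).exists
    exact ⟨x, hx1, hx2⟩
  obtain ⟨a, haE, haT⟩ := hres h₁m h₁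
  obtain ⟨b, hbE, hbT⟩ := hres h₂m h₂
  have h78 : (7 / 8 : ℝ≥0∞) < 1 := by
    rw [ENNReal.div_lt_iff (by norm_num) (by norm_num)]
    norm_num
  have hev : ∀ᶠ r in nhdsWithin (0 : ℝ) (Ioi 0),
      ((7 / 8 : ℝ≥0∞) < volume (E₁ ∩ closedBall a r) / volume (closedBall a r) ∧
       (7 / 8 : ℝ≥0∞) < volume (E₂ ∩ closedBall b r) / volume (closedBall b r)) :=
    (haT.eventually (eventually_gt_nhds h78)).and (hbT.eventually (eventually_gt_nhds h78))
  obtain ⟨r, ⟨hra, hrb⟩, hr'⟩ := (hev.and self_mem_nhdsWithin).exists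
  have hr : 0 < r := hr'
  have h78eq : (7 / 8 : ℝ≥0∞) = ENNReal.ofReal (7 / 8) := by
    rw [ENNReal.ofReal_div_of_pos (by norm_num)]; norm_num
  have hcompl : ∀ {E : Set ℝ} {x : ℝ}, MeasurableSet E →
      (7 / 8 : ℝ≥0∞) < volume (E ∩ closedBall x r) / volume (closedBall x r) →
      volume (closedBall x r \ E) ≤ ENNReal.ofReal (r / 4) := by
    intro E x hEm hlt
    have hV : volume (closedBall x r) = ENNReal.ofReal (2 * r) := Real.volume_closedBall x r
    have hVtop : volume (closedBall x r) ≠ ⊤ := by rw [hV]; exact ENNReal.ofReal_ne_top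
    have hV0 : volume (closedBall x r) ≠ 0 := by
      rw [hV, Ne, ENNReal.ofReal_eq_zero, not_le]; linarith
    rw [ENNReal.lt_div_iff_mul_lt (Or.inl hV0) (Or.inl hVtop)] at hlt
    have hsum := measure_inter_add_diff (μ := volume) (closedBall x r) hEm
    have hlt' : 7 / 8 * volume (closedBall x r) ≤ volume (closedBall x r ∩ E) := by
      rw [inter_comm]; exact hlt.le
    have h78top : (7 / 8 : ℝ≥0∞) ≠ ⊤ := h78eq ▸ ENNReal.ofReal_ne_top
    have h1 : volume (closedBall x r \ E) + 7 / 8 * volume (closedBall x r) ≤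
        volume (closedBall x r) := by
      calc volume (closedBall x r \ E) + 7 / 8 * volume (closedBall x r)
          ≤ volume (closedBall x r \ E) + volume (closedBall x r ∩ E) := add_le_add le_rfl hlt'
        _ = volume (closedBall x r) := by rw [add_comm]; exact hsum
    have h2 : volume (closedBall x r \ E) ≤
        volume (closedBall x r) - 7 / 8 * volume (closedBall x r) :=
      ENNReal.le_sub_of_add_le_right (ENNReal.mul_ne_top h78top hVtop) h1
    refine h2.trans_eq ?_
    rw [hV, h78eq, ← ENNReal.ofReal_mul (by norm_num : (0:ℝ) ≤ 7 / 8),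
      ← ENNReal.ofReal_sub _ (by nlinarith : (0:ℝ) ≤ 7 / 8 * (2 * r))]
    congr 1
    ring
  have hca := hcompl h₁m hra
  have hcb := hcompl h₂m hrb
  refine ⟨a, b, h₁s haE, h₂s hbE, ?_⟩
  intro hQ
  have hcover : Ioc (0 : ℝ) r ⊆ {s : ℝ | 0 < s ∧ a + s ∈ E₁ ∧ b + s ∈ E₂} ∪
      ((fun s => a + s) ⁻¹' (closedBall a r \ E₁) ∪
        (fun s => b + s) ⁻¹' (closedBall b r \ E₂)) := by
    rintro s ⟨hs0, hsr⟩
    have hmema : a + s ∈ closedBall a r := by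
      simp only [mem_closedBall, dist_eq_norm]
      rw [add_sub_cancel_left, Real.norm_eq_abs, abs_of_pos hs0]
      exact hsr
    have hmemb : b + s ∈ closedBall b r := by
      simp only [mem_closedBall, dist_eq_norm]
      rw [add_sub_cancel_left, Real.norm_eq_abs, abs_of_pos hs0]
      exact hsr
    by_cases h1 : a + s ∈ E₁
    · by_cases h2 : b + s ∈ E₂
      · exact Or.inl ⟨hs0, h1, h2⟩
      · exact Or.inr (Or.inr ⟨hmemb, h2⟩)
    · exact Or.inr (Or.inl ⟨hmema, h1⟩)
  have hle : volume (Ioc (0 : ℝ) r) ≤ volume {s : ℝ | 0 < s ∧ a + s ∈ E₁ ∧ b + s ∈ E₂} +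
      (volume ((fun s => a + s) ⁻¹' (closedBall a r \ E₁)) +
        volume ((fun s => b + s) ⁻¹' (closedBall b r \ E₂))) :=
    (measure_mono hcover).trans ((measure_union_le _ _).trans
      (add_le_add le_rfl (measure_union_le _ _)))
  rw [hQ, zero_add] at hle
  have hle2 := hle
  have hpa : volume ((fun s => a + s) ⁻¹' (closedBall a r \ E₁)) =
      volume (closedBall a r \ E₁) := measure_preimage_add volume a _
  have hpb : volume ((fun s => b + s) ⁻¹' (closedBall b r \ E₂)) =
      volume (closedBall b r \ E₂) := measure_preimage_add volume b _
  rw [hpa, hpb] at hle2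
  have hIoc : volume (Ioc (0 : ℝ) r) = ENNReal.ofReal r := by
    rw [Real.volume_Ioc, sub_zero]
  have hfinal : ENNReal.ofReal r ≤ ENNReal.ofReal (r / 2) := by
    calc ENNReal.ofReal r = volume (Ioc (0 : ℝ) r) := hIoc.symm
      _ ≤ volume (closedBall a r \ E₁) + volume (closedBall b r \ E₂) := hle2
      _ ≤ ENNReal.ofReal (r / 4) + ENNReal.ofReal (r / 4) := add_le_add hca hcb
      _ = ENNReal.ofReal (r / 2) := by
          rw [← ENNReal.ofReal_add (by linarith) (by linarith)]
          congr 1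
          ring
  rw [ENNReal.ofReal_le_ofReal_iff (by linarith)] at hfinal
  linarith

end Shift

section Main

open EMetric Filter ENNReal Bornology Topology

/-- Subadditivity of the minimal perimeter: `P(S₁ ∪ S₂) ≤ P(S₁) + P(S₂)`. -/
theorem Pm_union_le (d : ℕ) (hd : 1 ≤ d)
    (S₁ S₂ : Set (EuclideanSpace ℝ (Fin d)))
    (hS₁ : Bornology.IsBounded S₁) (hS₁ne : S₁.Nonempty)
    (hS₂ : Bornology.IsBounded S₂) (hS₂ne : S₂.Nonempty) :
    Pm (S₁ ∪ S₂) ≤ Pm S₁ + Pm S₂ := by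
  classical
  have hs : (0 : ℝ) ≤ (d : ℝ) - 1 := by
    have : (1 : ℝ) ≤ (d : ℝ) := by exact_mod_cast hd
    linarith
  refine ENNReal.le_of_forall_pos_le_add fun ε hε hfin => ?_
  have h₁top : Pm S₁ ≠ ⊤ := ne_top_of_le_ne_top hfin.ne le_self_add
  have h₂top : Pm S₂ ≠ ⊤ := ne_top_of_le_ne_top hfin.ne le_add_self
  set ν := volume.restrict (Ioi (0 : ℝ)) with hν
  have hε2 : ((ε : ℝ≥0∞) / 2) ≠ 0 := by
    simp [ENNReal.div_eq_zero_iff, hε.ne']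
  -- choose good supersets T₁ and T₂
  have hPm₁ : Pm S₁ = ⨅ (T : Set (EuclideanSpace ℝ (Fin d))) (_ : Bornology.IsBounded T)
      (_ : S₁ ⊆ T), P0 T := rfl
  have hPm₂ : Pm S₂ = ⨅ (T : Set (EuclideanSpace ℝ (Fin d))) (_ : Bornology.IsBounded T)
      (_ : S₂ ⊆ T), P0 T := rfl
  obtain ⟨T₁, hT₁b, hT₁s, hPT₁⟩ : ∃ T, ∃ _ : Bornology.IsBounded T, ∃ _ : S₁ ⊆ T,
      P0 T < Pm S₁ + ε / 2 := by
    have h := ENNReal.lt_add_right h₁top hε2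
    nth_rewrite 1 [hPm₁] at h
    simpa only [iInf_lt_iff] using h
  obtain ⟨T₂, hT₂b, hT₂s, hPT₂⟩ : ∃ T, ∃ _ : Bornology.IsBounded T, ∃ _ : S₂ ⊆ T,
      P0 T < Pm S₂ + ε / 2 := by
    have h := ENNReal.lt_add_right h₂top hε2
    nth_rewrite 1 [hPm₂] at h
    simpa only [iInf_lt_iff] using h
  set f₁ : ℝ → ℝ≥0∞ := fun t => μH[(d : ℝ) - 1] (frontier (thickening t T₁)) with hf₁
  set f₂ : ℝ → ℝ≥0∞ := fun t => μH[(d : ℝ) - 1] (frontier (thickening t T₂)) with hf₂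
  have hP₁ : essInf f₁ ν < Pm S₁ + ε / 2 := hPT₁
  have hP₂ : essInf f₂ ν < Pm S₂ + ε / 2 := hPT₂
  -- the sets where the boundary measure is small are non-null
  have hbad : ∀ (f : ℝ → ℝ≥0∞) (c : ℝ≥0∞), essInf f ν < c → ν {t | f t < c} ≠ 0 := by
    intro f c hlt h0
    have hae : (fun _ : ℝ => c) ≤ᶠ[ae ν] f := by
      rw [Filter.EventuallyLE, ae_iff]
      convert h0 using 2
      ext t
      simp [not_le]
    exact absurd (le_essInf_of_ae_le _ hae) (not_le.2 hlt)
  have hsplit : ∀ (f : ℝ → ℝ≥0∞) (c : ℝ≥0∞), ν {t | f t < c} ≠ 0 →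
      ∃ N : ℕ, volume ({t | f t < c} ∩ Ioo 0 (N : ℝ)) ≠ 0 := by
    intro f c h0
    by_contra hall
    push_neg at hall
    apply h0
    rw [hν, Measure.restrict_apply' measurableSet_Ioi]
    have hsub : {t | f t < c} ∩ Ioi 0 ⊆ ⋃ N : ℕ, ({t | f t < c} ∩ Ioo 0 (N : ℝ)) := by
      rintro t ⟨ht1, ht2⟩
      obtain ⟨N, hN⟩ := exists_nat_gt t
      exact mem_iUnion.2 ⟨N, ht1, ht2, hN⟩
    exact le_antisymm ((measure_mono hsub).trans (measure_iUnion_null hall).le) zero_le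
  obtain ⟨N₁, hN₁⟩ := hsplit f₁ _ (hbad f₁ _ hP₁)
  obtain ⟨N₂, hN₂⟩ := hsplit f₂ _ (hbad f₂ _ hP₂)
  -- measurable versions of the non-null sets, via level sets in compact sets
  have hK₁ : IsCompact (cthickening (N₁ : ℝ) T₁) :=
    isCompact_of_isClosed_isBounded isClosed_cthickening hT₁b.cthickening
  have hK₂ : IsCompact (cthickening (N₂ : ℝ) T₂) :=
    isCompact_of_isClosed_isBounded isClosed_cthickening hT₂b.cthickening
  set E₁ : Set ℝ := {t | μH[(d : ℝ) - 1] (cthickening (N₁ : ℝ) T₁ ∩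
      (fun x => infEdist x T₁) ⁻¹' {ENNReal.ofReal t}) < Pm S₁ + ε / 2} ∩ Ioo 0 (N₁ : ℝ)
    with hE₁
  set E₂ : Set ℝ := {t | μH[(d : ℝ) - 1] (cthickening (N₂ : ℝ) T₂ ∩
      (fun x => infEdist x T₂) ⁻¹' {ENNReal.ofReal t}) < Pm S₂ + ε / 2} ∩ Ioo 0 (N₂ : ℝ)
    with hE₂
  have hfeq : ∀ (T : Set (EuclideanSpace ℝ (Fin d))) (N : ℕ), ∀ t ∈ Ioo (0 : ℝ) (N : ℝ),
      μH[(d : ℝ) - 1] (frontier (thickening t T)) =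
      μH[(d : ℝ) - 1] (cthickening (N : ℝ) T ∩ (fun x => infEdist x T) ⁻¹' {ENNReal.ofReal t}) := by
    intro T N t ht
    rw [frontier_thickening_eq T ht.1]
    congr 1
    rw [inter_eq_self_of_subset_right]
    intro x hx
    rw [mem_preimage, mem_singleton_iff] at hx
    rw [mem_cthickening_iff]
    exact hx.le.trans (ENNReal.ofReal_le_ofReal ht.2.le)
  have hE₁eq : E₁ = {t | f₁ t < Pm S₁ + ε / 2} ∩ Ioo 0 (N₁ : ℝ) := by
    ext t
    simp only [hE₁, mem_inter_iff, mem_setOf_eq, hf₁]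
    constructor
    · rintro ⟨h1, h2⟩; exact ⟨by rw [hfeq T₁ N₁ t h2]; exact h1, h2⟩
    · rintro ⟨h1, h2⟩; exact ⟨by rw [← hfeq T₁ N₁ t h2]; exact h1, h2⟩
  have hE₂eq : E₂ = {t | f₂ t < Pm S₂ + ε / 2} ∩ Ioo 0 (N₂ : ℝ) := by
    ext t
    simp only [hE₂, mem_inter_iff, mem_setOf_eq, hf₂]
    constructor
    · rintro ⟨h1, h2⟩; exact ⟨by rw [hfeq T₂ N₂ t h2]; exact h1, h2⟩
    · rintro ⟨h1, h2⟩; exact ⟨by rw [← hfeq T₂ N₂ t h2]; exact h1, h2⟩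
  have hE₁m : MeasurableSet E₁ := by
    refine MeasurableSet.inter ?_ measurableSet_Ioo
    exact ((measurable_hausdorff_level hK₁ continuous_infEdist hs).comp
      ENNReal.measurable_ofReal) measurableSet_Iio
  have hE₂m : MeasurableSet E₂ := by
    refine MeasurableSet.inter ?_ measurableSet_Ioo
    exact ((measurable_hausdorff_level hK₂ continuous_infEdist hs).comp
      ENNReal.measurable_ofReal) measurableSet_Iio
  have hE₁vol : volume E₁ ≠ 0 := by rw [hE₁eq]; exact hN₁
  have hE₂vol : volume E₂ ≠ 0 := by rw [hE₂eq]; exact hN₂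
  obtain ⟨a, b, ha, hb, hQvol⟩ := exists_common_translate hE₁m hE₂m hE₁vol hE₂vol
    (hE₁eq ▸ inter_subset_right.trans Ioo_subset_Ioi_self)
    (hE₂eq ▸ inter_subset_right.trans Ioo_subset_Ioi_self)
  set T := thickening a T₁ ∪ thickening b T₂ with hT
  have hTb : Bornology.IsBounded T := (hT₁b.thickening).union (hT₂b.thickening)
  have hTsub : S₁ ∪ S₂ ⊆ T :=
    union_subset_union (hT₁s.trans (self_subset_thickening ha T₁))
      (hT₂s.trans (self_subset_thickening hb T₂))
  have hPm_le : Pm (S₁ ∪ S₂) ≤ P0 T := by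
    have e : Pm (S₁ ∪ S₂) = ⨅ (T : Set (EuclideanSpace ℝ (Fin d)))
        (_ : Bornology.IsBounded T) (_ : S₁ ∪ S₂ ⊆ T), P0 T := rfl
    rw [e]
    exact iInf_le_of_le T (iInf_le_of_le hTb (iInf_le_of_le hTsub le_rfl))
  set Q := {s : ℝ | 0 < s ∧ a + s ∈ E₁ ∧ b + s ∈ E₂} with hQdef
  have hkey : ∀ s ∈ Q, μH[(d : ℝ) - 1] (frontier (thickening s T)) <
      (Pm S₁ + ε / 2) + (Pm S₂ + ε / 2) := by
    intro s hsQ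
    obtain ⟨hs0, hsa, hsb⟩ := hsQ
    rw [hE₁] at hsa
    rw [hE₂] at hsb
    have hTs : thickening s T = thickening (s + a) T₁ ∪ thickening (s + b) T₂ := by
      rw [hT, thickening_union, thickening_thickening hs0 ha, thickening_thickening hs0 hb]
    have hfr : frontier (thickening s T) ⊆
        frontier (thickening (s + a) T₁) ∪ frontier (thickening (s + b) T₂) := by
      rw [hTs]
      exact (frontier_union_subset _ _).trans
        (union_subset_union inter_subset_left inter_subset_right)
    refine lt_of_le_of_lt ((measure_mono hfr).trans (measure_union_le _ _))
      (ENNReal.add_lt_add ?_ ?_)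
    · rw [add_comm s a, hfeq T₁ N₁ (a + s) hsa.2]
      exact hsa.1
    · rw [add_comm s b, hfeq T₂ N₂ (b + s) hsb.2]
      exact hsb.1
  have hQ0 : Q ⊆ Ioi (0 : ℝ) := fun s hs => hs.1
  have hνQ : ν Q ≠ 0 := by
    rw [hν, Measure.restrict_apply' measurableSet_Ioi, inter_eq_self_of_subset_left hQ0]
    exact hQvol
  have hP0T : P0 T ≤ (Pm S₁ + ε / 2) + (Pm S₂ + ε / 2) := by
    by_contra hc
    push_neg at hc
    have hc' : (Pm S₁ + ε / 2) + (Pm S₂ + ε / 2) <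
        essInf (fun t : ℝ => μH[(d : ℝ) - 1] (frontier (thickening t T))) ν := hc
    have hae := ae_lt_of_lt_essInf hc'
    rw [ae_iff] at hae
    apply hνQ
    refine le_antisymm (le_trans (measure_mono ?_) hae.le) zero_le
    intro s hsQ
    simp only [mem_setOf_eq, not_lt]
    exact (hkey s hsQ).le
  calc Pm (S₁ ∪ S₂) ≤ P0 T := hPm_le
    _ ≤ (Pm S₁ + ε / 2) + (Pm S₂ + ε / 2) := hP0T
    _ = Pm S₁ + Pm S₂ + ε := by rw [add_add_add_comm, ENNReal.add_halves]

end Main
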